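/- Consider the networked SAIR(S) model with δ_i = 0 for all i, with symmetric nonnegative adjacency matrix W, positive diagonal matrices B = diag(β_i), K = diag(κ_i), Γ = diag(γ_i), Σ = diag(σ_i), and q ∈ [0,1]. Let (s, a, p, r) be a solution whose state remains in the simplex (all components in [0,1], s_i + a_i + p_i + r_i = 1 for all i and t ≥ 0), and define V(t) = a(t)ᵀB⁻¹a(t) + p(t)ᵀB⁻¹p(t). Then for all t ≥ 0, (1/2)·dV/dt ≤ aᵀ[qW − B⁻¹(Σ+K)]a + pᵀ[(1−q)W − B⁻¹Γ]p + aᵀ(W + B⁻¹Σ)p, where a = a(t), p = p(t). -/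

import Mathlib

open Matrix Filter

/-- Lyapunov derivative bound for the networked SAIR(S) model with
permanent immunity (`δ_i = 0`): along any solution remaining in the simplex, the
Lyapunov function `V = aᵀB⁻¹a + pᵀB⁻¹p` satisfies
`(1/2)·dV/dt ≤ aᵀ[qW − B⁻¹(Σ+K)]a + pᵀ[(1−q)W − B⁻¹Γ]p + aᵀ(W + B⁻¹Σ)p`. -/
theorem nsairs_lyapunov_derivative_bound
    (n : ℕ) (s a p r : Fin n → ℝ → ℝ)
    (β γ κ σ δ : Fin n → ℝ) (Wm : Matrix (Fin n) (Fin n) ℝ) (q : ℝ)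
    (hβ : ∀ i, 0 < β i) (hγ : ∀ i, 0 < γ i) (hκ : ∀ i, 0 < κ i)
    (hσ : ∀ i, 0 < σ i) (hδ : ∀ i, δ i = 0)
    (hWsymm : Wm.IsSymm) (hWnonneg : ∀ i j, 0 ≤ Wm i j)
    (hq0 : 0 ≤ q) (hq1 : q ≤ 1)
    (hs : ∀ i, ∀ t ≥ (0 : ℝ), HasDerivAt (s i)
      (-(β i) * s i t * (∑ j, Wm i j * (a j t + p j t)) + δ i * r i t) t)
    (ha : ∀ i, ∀ t ≥ (0 : ℝ), HasDerivAt (a i)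
      (q * β i * s i t * (∑ j, Wm i j * (a j t + p j t)) - σ i * a i t - κ i * a i t) t)
    (hp : ∀ i, ∀ t ≥ (0 : ℝ), HasDerivAt (p i)
      ((1 - q) * β i * s i t * (∑ j, Wm i j * (a j t + p j t)) + σ i * a i t - γ i * p i t) t)
    (hr : ∀ i, ∀ t ≥ (0 : ℝ), HasDerivAt (r i)
      (κ i * a i t + γ i * p i t - δ i * r i t) t)
    (hsimplex : ∀ t ≥ (0 : ℝ), ∀ i,
      s i t ∈ Set.Icc (0 : ℝ) 1 ∧ a i t ∈ Set.Icc (0 : ℝ) 1 ∧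
      p i t ∈ Set.Icc (0 : ℝ) 1 ∧ r i t ∈ Set.Icc (0 : ℝ) 1 ∧
      s i t + a i t + p i t + r i t = 1)
    (Bm Km Γm Sm : Matrix (Fin n) (Fin n) ℝ)
    (hBm : Bm = Matrix.diagonal β) (hKm : Km = Matrix.diagonal κ)
    (hΓm : Γm = Matrix.diagonal γ) (hSm : Sm = Matrix.diagonal σ)
    (avec pvec : ℝ → (Fin n → ℝ))
    (havec : ∀ t i, avec t i = a i t) (hpvec : ∀ t i, pvec t i = p i t)
    (V : ℝ → ℝ)
    (hV : ∀ t, V t = avec t ⬝ᵥ (Bm⁻¹ *ᵥ avec t) + pvec t ⬝ᵥ (Bm⁻¹ *ᵥ pvec t)) :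
    ∀ t ≥ (0 : ℝ),
      (1 / 2) * deriv V t ≤
        avec t ⬝ᵥ ((q • Wm - Bm⁻¹ * (Sm + Km)) *ᵥ avec t)
        + pvec t ⬝ᵥ (((1 - q) • Wm - Bm⁻¹ * Γm) *ᵥ pvec t)
        + avec t ⬝ᵥ ((Wm + Bm⁻¹ * Sm) *ᵥ pvec t) := by
  intro t ht
  have hBinv : Bm⁻¹ = Matrix.diagonal (fun i => (β i)⁻¹) := by
    rw [hBm]
    apply Matrix.inv_eq_right_inv
    rw [Matrix.diagonal_mul_diagonal]
    convert Matrix.diagonal_one with i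
    exact mul_inv_cancel₀ (hβ i).ne'
  -- V as an explicit sum
  have hVF : V = fun u => ∑ i, ((β i)⁻¹ * (a i u * a i u) + (β i)⁻¹ * (p i u * p i u)) := by
    funext u
    rw [hV, hBinv]
    simp only [dotProduct, Matrix.mulVec_diagonal, havec, hpvec]
    rw [← Finset.sum_add_distrib]
    exact Finset.sum_congr rfl fun i _ => by ring
  -- abbreviations
  set A : Fin n → ℝ := fun i => a i t with hA
  set P : Fin n → ℝ := fun i => p i t with hP
  set C : Fin n → ℝ := fun i => ∑ j, Wm i j * (a j t + p j t) with hC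
  set Da : Fin n → ℝ := fun i =>
    q * β i * s i t * (∑ j, Wm i j * (a j t + p j t)) - σ i * a i t - κ i * a i t with hDa
  set Dp : Fin n → ℝ := fun i =>
    (1 - q) * β i * s i t * (∑ j, Wm i j * (a j t + p j t)) + σ i * a i t - γ i * p i t with hDp
  -- derivative of V at t
  have hD : HasDerivAt V (∑ i, ((β i)⁻¹ * (Da i * a i t + a i t * Da i)
      + (β i)⁻¹ * (Dp i * p i t + p i t * Dp i))) t := by
    rw [hVF]
    exact HasDerivAt.fun_sum fun i _ =>
      ((((ha i t ht).mul (ha i t ht)).const_mul _).add (((hp i t ht).mul (hp i t ht)).const_mul _))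
  have hderiv : deriv V t = ∑ i, ((β i)⁻¹ * (Da i * a i t + a i t * Da i)
      + (β i)⁻¹ * (Dp i * p i t + p i t * Dp i)) := hD.deriv
  -- simplex facts
  have hA0 : ∀ i, 0 ≤ A i := fun i => (hsimplex t ht i).2.1.1
  have hP0 : ∀ i, 0 ≤ P i := fun i => (hsimplex t ht i).2.2.1.1
  have hs1 : ∀ i, s i t ≤ 1 := fun i => (hsimplex t ht i).1.2
  have hC0 : ∀ i, 0 ≤ C i := fun i =>
    Finset.sum_nonneg fun j _ => mul_nonneg (hWnonneg i j) (add_nonneg (hA0 j) (hP0 j))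
  -- symmetry swap
  have hswap : ∑ i, P i * (Wm *ᵥ A) i = ∑ i, A i * (Wm *ᵥ P) i := by
    simp only [Matrix.mulVec, dotProduct, Finset.mul_sum]
    rw [Finset.sum_comm]
    refine Finset.sum_congr rfl fun j _ => Finset.sum_congr rfl fun i _ => ?_
    rw [hWsymm.apply i j]
    ring
  have hCsplit : ∀ i, C i = (Wm *ᵥ A) i + (Wm *ᵥ P) i := by
    intro i
    simp only [hC, Matrix.mulVec, dotProduct, ← Finset.sum_add_distrib]
    exact Finset.sum_congr rfl fun j _ => by ring
  -- diagonal simplifications of the RHS matrices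
  have h1 : Bm⁻¹ * (Sm + Km) = Matrix.diagonal (fun i => (β i)⁻¹ * (σ i + κ i)) := by
    rw [hBinv, hSm, hKm, Matrix.diagonal_add, Matrix.diagonal_mul_diagonal]
  have h2 : Bm⁻¹ * Γm = Matrix.diagonal (fun i => (β i)⁻¹ * γ i) := by
    rw [hBinv, hΓm, Matrix.diagonal_mul_diagonal]
  have h3 : Bm⁻¹ * Sm = Matrix.diagonal (fun i => (β i)⁻¹ * σ i) := by
    rw [hBinv, hSm, Matrix.diagonal_mul_diagonal]
  -- RHS as a single explicit sum
  have hRHS : avec t ⬝ᵥ ((q • Wm - Bm⁻¹ * (Sm + Km)) *ᵥ avec t)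
      + pvec t ⬝ᵥ (((1 - q) • Wm - Bm⁻¹ * Γm) *ᵥ pvec t)
      + avec t ⬝ᵥ ((Wm + Bm⁻¹ * Sm) *ᵥ pvec t)
      = ∑ i, (q * (A i * (Wm *ᵥ A) i) - (β i)⁻¹ * (σ i + κ i) * (A i * A i)
        + ((1 - q) * (P i * (Wm *ᵥ P) i) - (β i)⁻¹ * γ i * (P i * P i))
        + (A i * (Wm *ᵥ P) i + (β i)⁻¹ * σ i * (A i * P i))) := by
    have hav : avec t = A := funext fun i => havec t i
    have hpv : pvec t = P := funext fun i => hpvec t i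
    rw [h1, h2, h3, hav, hpv]
    simp only [dotProduct, Matrix.sub_mulVec, Matrix.add_mulVec,
      Matrix.smul_mulVec, Pi.sub_apply, Pi.add_apply, Pi.smul_apply, smul_eq_mul,
      Matrix.mulVec_diagonal]
    rw [← Finset.sum_add_distrib, ← Finset.sum_add_distrib]
    exact Finset.sum_congr rfl fun i _ => by ring
  -- per-index bound on the derivative terms
  have hterm : ∀ i, (1/2) * ((β i)⁻¹ * (Da i * a i t + a i t * Da i)
      + (β i)⁻¹ * (Dp i * p i t + p i t * Dp i))
      ≤ q * (A i * C i) + (1 - q) * (P i * C i)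
        + (β i)⁻¹ * σ i * (A i * P i)
        - (β i)⁻¹ * (σ i + κ i) * (A i * A i)
        - (β i)⁻¹ * γ i * (P i * P i) := by
    intro i
    have hββ : (β i)⁻¹ * β i = 1 := inv_mul_cancel₀ (hβ i).ne'
    have key : 0 ≤ (1 - s i t) * (q * A i + (1 - q) * P i) * C i :=
      mul_nonneg (mul_nonneg (by linarith [hs1 i])
        (add_nonneg (mul_nonneg hq0 (hA0 i)) (mul_nonneg (by linarith) (hP0 i)))) (hC0 i)
    have hlhs : (1/2) * ((β i)⁻¹ * (Da i * a i t + a i t * Da i)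
        + (β i)⁻¹ * (Dp i * p i t + p i t * Dp i))
        = q * s i t * (A i * C i) + (1 - q) * s i t * (P i * C i)
          + (β i)⁻¹ * σ i * (A i * P i)
          - (β i)⁻¹ * (σ i + κ i) * (A i * A i)
          - (β i)⁻¹ * γ i * (P i * P i) := by
      have hbne : β i ≠ 0 := (hβ i).ne'
      simp only [hDa, hDp, hA, hP, hC]
      field_simp
      ring
    rw [hlhs]
    nlinarith [key]
  -- assemble
  rw [hderiv, hRHS, Finset.mul_sum]
  have hle : ∑ i, (1/2) * ((β i)⁻¹ * (Da i * a i t + a i t * Da i)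
      + (β i)⁻¹ * (Dp i * p i t + p i t * Dp i))
      ≤ ∑ i, (q * (A i * C i) + (1 - q) * (P i * C i)
        + (β i)⁻¹ * σ i * (A i * P i)
        - (β i)⁻¹ * (σ i + κ i) * (A i * A i)
        - (β i)⁻¹ * γ i * (P i * P i)) :=
    Finset.sum_le_sum fun i _ => hterm i
  refine le_trans hle (le_of_eq ?_)
  have e1 : ∑ i, (q * (A i * C i) + (1 - q) * (P i * C i)
        + (β i)⁻¹ * σ i * (A i * P i)
        - (β i)⁻¹ * (σ i + κ i) * (A i * A i)
        - (β i)⁻¹ * γ i * (P i * P i))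
      = ∑ i, (q * (A i * (Wm *ᵥ A) i) + q * (A i * (Wm *ᵥ P) i)
        + ((1 - q) * (P i * (Wm *ᵥ A) i) + (1 - q) * (P i * (Wm *ᵥ P) i))
        + (β i)⁻¹ * σ i * (A i * P i)
        - (β i)⁻¹ * (σ i + κ i) * (A i * A i)
        - (β i)⁻¹ * γ i * (P i * P i)) := by
    refine Finset.sum_congr rfl fun i _ => ?_
    rw [hCsplit i]
    ring
  rw [e1]
  simp only [Finset.sum_add_distrib, Finset.sum_sub_distrib, ← Finset.mul_sum]
  rw [hswap]
  ring
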